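/- arXiv:1404.6538 — 15 statements merged into one kernel-verified Lean document; each statement's English description precedes it below -/
import Mathlib

section
/- Let p, q, d be positive integers and let φ_1, …, φ_q : {0,1}^p → {0,1} be Boolean functions satisfying: (i) min over y ∈ {0,1}^p of Σ_{i=1}^q φ_i(y) = 1, and (ii) for every proper subset I ⊊ {1,…,q} there exists y_I ∈ {0,1}^p with Σ_{i∈I} φ_i(y_I) = 0. Let P_1, …, P_q ⊆ {1,…,d} be subsets whose union is {1,…,d}. Then for every x ∈ {0,1}^d, ∏_{j=1}^d x_j = min over y ∈ {0,1}^p of Σ_{i=1}^q φ_i(y) · ∏_{j∈P_i} x_j. -/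
/-- Theorem 1 (multiple splits of terms). Boolean functions `φ i : {0,1}^p → {0,1}`
are modeled as real-valued functions on `Fin p → Bool` taking only the values 0 and 1.
Condition (i): the minimum over `y` of `∑ i, φ i y` equals 1 (stated via `IsLeast`).
Condition (ii): for every proper subset `I ⊊ [q]` there is `y` with `∑ i ∈ I, φ i y = 0`.
Conclusion: `∏_{j=1}^d x_j` is the minimum over `y ∈ {0,1}^p` of
`∑ i, φ i y * ∏_{j ∈ P i} x_j`. -/
theorem quadratization_multiple_splits
    (p q d : ℕ) (hp : 0 < p) (hq : 0 < q) (hd : 0 < d)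
    (φ : Fin q → (Fin p → Bool) → ℝ)
    (hφ01 : ∀ i y, φ i y = 0 ∨ φ i y = 1)
    (hmin : IsLeast {s : ℝ | ∃ y : Fin p → Bool, s = ∑ i, φ i y} 1)
    (hproper : ∀ I : Finset (Fin q), I ≠ Finset.univ →
      ∃ y : Fin p → Bool, ∑ i ∈ I, φ i y = 0)
    (P : Fin q → Finset (Fin d)) (hcover : ∀ j : Fin d, ∃ i, j ∈ P i)
    (x : Fin d → ℝ) (hx : ∀ j, x j = 0 ∨ x j = 1) :
    IsLeast {s : ℝ | ∃ y : Fin p → Bool, s = ∑ i, φ i y * ∏ j ∈ P i, x j}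
      (∏ j, x j) := by
  have hφ0 : ∀ i y, (0:ℝ) ≤ φ i y := by
    intro i y; rcases hφ01 i y with h | h <;> simp [h]
  have hxnn : ∀ s : Finset (Fin d), 0 ≤ ∏ j ∈ s, x j := by
    intro s
    exact Finset.prod_nonneg fun j _ => (hx j).elim (le_of_eq ∘ Eq.symm) (fun h => h ▸ zero_le_one)
  by_cases hall : ∀ j, x j = 1
  · have hx1 : ∀ s : Finset (Fin d), ∏ j ∈ s, x j = 1 := by
      intro s; exact Finset.prod_eq_one fun j _ => hall j
    constructor
    · obtain ⟨⟨y, hy⟩, _⟩ := hmin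
      refine ⟨y, ?_⟩
      rw [hx1]
      rw [hy]
      exact Finset.sum_congr rfl fun i _ => by rw [hx1, mul_one]
    · rintro s ⟨y, rfl⟩
      rw [hx1]
      have : ∑ i, φ i y * ∏ j ∈ P i, x j = ∑ i, φ i y :=
        Finset.sum_congr rfl fun i _ => by rw [hx1, mul_one]
      rw [this]
      exact hmin.2 ⟨y, rfl⟩
  · push_neg at hall
    obtain ⟨j0, hj0⟩ := hall
    have hxj0 : x j0 = 0 := (hx j0).resolve_right hj0
    have hprod0 : ∏ j, x j = 0 := Finset.prod_eq_zero (Finset.mem_univ j0) hxj0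
    rw [hprod0]
    constructor
    · obtain ⟨i0, hi0⟩ := hcover j0
      set I : Finset (Fin q) := Finset.univ.filter (fun i => j0 ∉ P i) with hI
      have hIne : I ≠ Finset.univ := by
        intro h
        have : i0 ∈ I := h ▸ Finset.mem_univ i0
        simp [hI] at this
        exact this hi0
      obtain ⟨y, hy⟩ := hproper I hIne
      refine ⟨y, ?_⟩
      have hyz : ∀ i ∈ I, φ i y = 0 := by
        intro i hi
        by_contra h
        have hlt : 0 < φ i y := lt_of_le_of_ne (hφ0 i y) (Ne.symm h)
        have : 0 < ∑ i ∈ I, φ i y :=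
          Finset.sum_pos' (fun i _ => hφ0 i y) ⟨i, hi, hlt⟩
        linarith
      symm
      apply Finset.sum_eq_zero
      intro i _
      by_cases hmem : j0 ∈ P i
      · rw [Finset.prod_eq_zero hmem hxj0, mul_zero]
      · rw [hyz i (by simp [hI, hmem]), zero_mul]
    · rintro s ⟨y, rfl⟩
      exact Finset.sum_nonneg fun i _ => mul_nonneg (hφ0 i y) (hxnn _)
end

section
/- Let n be a positive integer, C ⊆ {1,…,n}, and let 𝓗 be a finite family of subsets of {1,…,n}∖C with nonnegative real coefficients α_H ≥ 0 for H ∈ 𝓗. Then for every x ∈ {0,1}^n, Σ_{H∈𝓗} α_H ∏_{j∈H∪C} x_j = min over w ∈ {0,1} of [ (Σ_{H∈𝓗} α_H)·(1−w)·∏_{j∈C} x_j + Σ_{H∈𝓗} α_H · w · ∏_{j∈H} x_j ]. -/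
/-- Theorem 2 (splitting a common part `C` from a collection of positive terms).
The family `𝓗` of subsets of `[n] \ C` is a `Finset` of `Finset`s, each disjoint
from `C`, with nonnegative coefficients `α`. The minimum over the new binary
variable `w ∈ {0,1}` is stated via `IsLeast`. -/
theorem quadratization_common_parts_positive
    (n : ℕ) (hn : 0 < n) (C : Finset (Fin n))
    (𝓗 : Finset (Finset (Fin n))) (h𝓗 : ∀ H ∈ 𝓗, Disjoint H C)
    (α : Finset (Fin n) → ℝ) (hα : ∀ H ∈ 𝓗, 0 ≤ α H)
    (x : Fin n → ℝ) (hx : ∀ j, x j = 0 ∨ x j = 1) :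
    IsLeast
      {s : ℝ | ∃ w : ℝ, (w = 0 ∨ w = 1) ∧
        s = (∑ H ∈ 𝓗, α H) * (1 - w) * ∏ j ∈ C, x j
            + ∑ H ∈ 𝓗, α H * w * ∏ j ∈ H, x j}
      (∑ H ∈ 𝓗, α H * ∏ j ∈ H ∪ C, x j) := by
  have hp : ∀ S : Finset (Fin n), (∏ j ∈ S, x j) = 0 ∨ (∏ j ∈ S, x j) = 1 := by
    intro S
    induction S using Finset.induction with
    | empty => right; simp
    | insert a s h ih =>
      rw [Finset.prod_insert h]
      rcases hx _ with h0 | h1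
      · left; rw [h0]; ring
      · rcases ih with h0 | h1'
        · left; rw [h0]; ring
        · right; rw [h1, h1']; ring
  have h0 : ∀ S : Finset (Fin n), 0 ≤ ∏ j ∈ S, x j := by
    intro S; rcases hp S with h | h <;> rw [h] <;> norm_num
  have h1 : ∀ S : Finset (Fin n), (∏ j ∈ S, x j) ≤ 1 := by
    intro S; rcases hp S with h | h <;> rw [h] <;> norm_num
  have key : (∑ H ∈ 𝓗, α H * ∏ j ∈ H ∪ C, x j)
      = ∑ H ∈ 𝓗, α H * (∏ j ∈ H, x j) * (∏ j ∈ C, x j) := by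
    refine Finset.sum_congr rfl fun H hH => ?_
    rw [Finset.prod_union (h𝓗 H hH)]; ring
  constructor
  · rcases hp C with hc | hc
    · refine ⟨0, Or.inl rfl, ?_⟩
      simp [key, hc]
    · refine ⟨1, Or.inr rfl, ?_⟩
      simp [key, hc]
  · rintro s ⟨w, (rfl | rfl), rfl⟩
    · rw [key]
      simp only [sub_zero, mul_one, mul_zero, zero_mul, Finset.sum_const_zero, add_zero]
      rw [Finset.sum_mul]
      refine Finset.sum_le_sum fun H hH => ?_
      exact mul_le_mul_of_nonneg_right (mul_le_of_le_one_right (hα H hH) (h1 H)) (h0 C)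
    · rw [key]
      simp only [sub_self, zero_mul, mul_zero, mul_one, zero_add]
      refine Finset.sum_le_sum fun H hH => ?_
      exact mul_le_of_le_one_right (mul_nonneg (hα H hH) (h0 H)) (h1 C)
end

section
/- Let n be a positive integer, C ⊆ {1,…,n}, and let 𝓗 be a finite family of subsets of {1,…,n}∖C with nonnegative real coefficients α_H ≥ 0 for H ∈ 𝓗. Then for every x ∈ {0,1}^n, −Σ_{H∈𝓗} α_H ∏_{j∈H∪C} x_j = min over w ∈ {0,1} of Σ_{H∈𝓗} α_H · w · (1 − ∏_{j∈C} x_j − ∏_{j∈H} x_j). -/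
private lemma prod_zero_one {n : ℕ} (x : Fin n → ℝ) (hx : ∀ j, x j = 0 ∨ x j = 1)
    (s : Finset (Fin n)) : ∏ j ∈ s, x j = 0 ∨ ∏ j ∈ s, x j = 1 := by
  induction s using Finset.induction with
  | empty => right; simp
  | insert _ _ h ih =>
    rename_i a s'
    rw [Finset.prod_insert h]
    rcases hx a with h1 | h1 <;> rcases ih with h2 | h2 <;> simp [h1, h2]

/-- Theorem 3 (splitting a common part `C` from a collection of negative terms).
The family `𝓗` of subsets of `[n] \ C` is a `Finset` of `Finset`s, each disjoint
from `C`, with nonnegative coefficients `α`. The minimum over the new binary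
variable `w ∈ {0,1}` is stated via `IsLeast`. -/
theorem quadratization_common_parts_negative
    (n : ℕ) (hn : 0 < n) (C : Finset (Fin n))
    (𝓗 : Finset (Finset (Fin n))) (h𝓗 : ∀ H ∈ 𝓗, Disjoint H C)
    (α : Finset (Fin n) → ℝ) (hα : ∀ H ∈ 𝓗, 0 ≤ α H)
    (x : Fin n → ℝ) (hx : ∀ j, x j = 0 ∨ x j = 1) :
    IsLeast
      {s : ℝ | ∃ w : ℝ, (w = 0 ∨ w = 1) ∧
        s = ∑ H ∈ 𝓗, α H * w * (1 - (∏ j ∈ C, x j) - ∏ j ∈ H, x j)}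
      (-∑ H ∈ 𝓗, α H * ∏ j ∈ H ∪ C, x j) := by
  constructor
  · refine ⟨∏ j ∈ C, x j, prod_zero_one x hx C, ?_⟩
    rw [← Finset.sum_neg_distrib]
    refine Finset.sum_congr rfl fun H hH => ?_
    rw [Finset.prod_union (h𝓗 H hH)]
    have hp : (∏ j ∈ C, x j) * (∏ j ∈ C, x j) = ∏ j ∈ C, x j := by
      rcases prod_zero_one x hx C with h | h <;> rw [h] <;> ring
    linear_combination (α H) * hp
  · rintro s ⟨w, hw, rfl⟩
    rw [neg_le, ← Finset.sum_neg_distrib]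
    refine Finset.sum_le_sum fun H hH => ?_
    have hq := prod_zero_one x hx H
    have hp := prod_zero_one x hx C
    rw [Finset.prod_union (h𝓗 H hH)]
    have hα' := hα H hH
    rcases hw with h1 | h1 <;> rcases hp with h2 | h2 <;> rcases hq with h3 | h3 <;>
      rw [h1, h2, h3] <;> nlinarith
end

section
/- In the identity of Theorem 2, the choice w = ∏_{j∈C} x_j attains the minimum: for every x ∈ {0,1}^n, setting w* = ∏_{j∈C} x_j gives (Σ_{H∈𝓗} α_H)·(1−w*)·∏_{j∈C} x_j + Σ_{H∈𝓗} α_H · w* · ∏_{j∈H} x_j = Σ_{H∈𝓗} α_H ∏_{j∈H∪C} x_j, and this value is ≤ the value of the expression at both w = 0 and w = 1. -/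
/-- Key claim in the proof of Theorem 2: the choice `w* = ∏_{j∈C} x_j` attains the
minimum. At `w = w*` the expression equals `∑ α_H ∏_{j∈H∪C} x_j`, and this value is
at most the value of the expression at `w = 0` and at `w = 1`. -/
theorem common_parts_positive_minimizer
    (n : ℕ) (hn : 0 < n) (C : Finset (Fin n))
    (𝓗 : Finset (Finset (Fin n))) (h𝓗 : ∀ H ∈ 𝓗, Disjoint H C)
    (α : Finset (Fin n) → ℝ) (hα : ∀ H ∈ 𝓗, 0 ≤ α H)
    (x : Fin n → ℝ) (hx : ∀ j, x j = 0 ∨ x j = 1) :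
    ((∑ H ∈ 𝓗, α H) * (1 - ∏ j ∈ C, x j) * ∏ j ∈ C, x j
        + ∑ H ∈ 𝓗, α H * (∏ j ∈ C, x j) * ∏ j ∈ H, x j
      = ∑ H ∈ 𝓗, α H * ∏ j ∈ H ∪ C, x j)
    ∧ (∑ H ∈ 𝓗, α H * ∏ j ∈ H ∪ C, x j
        ≤ (∑ H ∈ 𝓗, α H) * (1 - 0) * ∏ j ∈ C, x j
            + ∑ H ∈ 𝓗, α H * 0 * ∏ j ∈ H, x j)
    ∧ (∑ H ∈ 𝓗, α H * ∏ j ∈ H ∪ C, x j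
        ≤ (∑ H ∈ 𝓗, α H) * (1 - 1) * ∏ j ∈ C, x j
            + ∑ H ∈ 𝓗, α H * 1 * ∏ j ∈ H, x j) := by
  -- every product of 0/1 entries is 0 or 1
  have hprod : ∀ s : Finset (Fin n), (∏ j ∈ s, x j = 0) ∨ (∏ j ∈ s, x j = 1) := by
    intro s
    by_cases h : ∀ j ∈ s, x j = 1
    · right; exact Finset.prod_eq_one h
    · left
      push_neg at h
      obtain ⟨j, hj, hj1⟩ := h
      exact Finset.prod_eq_zero hj ((hx j).resolve_right hj1)
  have hsplit : ∀ H ∈ 𝓗, (∏ j ∈ H ∪ C, x j) = (∏ j ∈ H, x j) * ∏ j ∈ C, x j := by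
    intro H hH
    rw [← Finset.prod_union (h𝓗 H hH)]
  have hRW : (∑ H ∈ 𝓗, α H * ∏ j ∈ H ∪ C, x j)
      = ∑ H ∈ 𝓗, α H * ((∏ j ∈ H, x j) * ∏ j ∈ C, x j) :=
    Finset.sum_congr rfl fun H hH => by rw [hsplit H hH]
  rcases hprod C with hp | hp
  · refine ⟨?_, ?_, ?_⟩ <;> rw [hRW, hp] <;> simp
    exact Finset.sum_nonneg fun H hH => mul_nonneg (hα H hH)
      (by rcases hprod H with h | h <;> simp [h])
  · refine ⟨?_, ?_, ?_⟩ <;> rw [hRW, hp] <;> simp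
    calc ∑ H ∈ 𝓗, α H * ∏ j ∈ H, x j ≤ ∑ H ∈ 𝓗, α H * 1 :=
          Finset.sum_le_sum fun H hH => mul_le_mul_of_nonneg_left
            (by rcases hprod H with h | h <;> simp [h]) (hα H hH)
      _ = ∑ H ∈ 𝓗, α H := by simp
end

section
/- In the identity of Theorem 3, the choice w = ∏_{j∈C} x_j attains the minimum: for every x ∈ {0,1}^n, setting w* = ∏_{j∈C} x_j gives Σ_{H∈𝓗} α_H · w* · (1 − ∏_{j∈C} x_j − ∏_{j∈H} x_j) = −Σ_{H∈𝓗} α_H ∏_{j∈H∪C} x_j, and this value is ≤ the value of the expression at both w = 0 and w = 1. -/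
/-- Key claim in the proof of Theorem 3: the choice `w* = ∏_{j∈C} x_j` attains the
minimum. At `w = w*` the expression equals `-∑ α_H ∏_{j∈H∪C} x_j`, and this value is
at most the value of the expression at `w = 0` and at `w = 1`. -/
theorem common_parts_negative_minimizer
    (n : ℕ) (hn : 0 < n) (C : Finset (Fin n))
    (𝓗 : Finset (Finset (Fin n))) (h𝓗 : ∀ H ∈ 𝓗, Disjoint H C)
    (α : Finset (Fin n) → ℝ) (hα : ∀ H ∈ 𝓗, 0 ≤ α H)
    (x : Fin n → ℝ) (hx : ∀ j, x j = 0 ∨ x j = 1) :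
    (∑ H ∈ 𝓗, α H * (∏ j ∈ C, x j) * (1 - (∏ j ∈ C, x j) - ∏ j ∈ H, x j)
      = -∑ H ∈ 𝓗, α H * ∏ j ∈ H ∪ C, x j)
    ∧ (-∑ H ∈ 𝓗, α H * ∏ j ∈ H ∪ C, x j
        ≤ ∑ H ∈ 𝓗, α H * 0 * (1 - (∏ j ∈ C, x j) - ∏ j ∈ H, x j))
    ∧ (-∑ H ∈ 𝓗, α H * ∏ j ∈ H ∪ C, x j
        ≤ ∑ H ∈ 𝓗, α H * 1 * (1 - (∏ j ∈ C, x j) - ∏ j ∈ H, x j)) := by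
  have hp : ∀ S : Finset (Fin n), (∏ j ∈ S, x j) = 0 ∨ (∏ j ∈ S, x j) = 1 := by
    intro S
    induction S using Finset.induction with
    | empty => right; simp
    | @insert a s hj ih =>
      rw [Finset.prod_insert hj]
      rcases hx a with h | h <;> rcases ih with h' | h' <;> simp [h, h']
  have hunion : ∀ H ∈ 𝓗, (∏ j ∈ H ∪ C, x j) = (∏ j ∈ H, x j) * (∏ j ∈ C, x j) := by
    intro H hH
    rw [← Finset.prod_union (h𝓗 H hH)]
  have h0 : ∀ S : Finset (Fin n), (0:ℝ) ≤ ∏ j ∈ S, x j := by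
    intro S; rcases hp S with h | h <;> simp [h]
  have h1 : ∀ S : Finset (Fin n), (∏ j ∈ S, x j) ≤ 1 := by
    intro S; rcases hp S with h | h <;> simp [h]
  have hsq : ((∏ j ∈ C, x j) : ℝ) * (∏ j ∈ C, x j) = ∏ j ∈ C, x j := by
    rcases hp C with h | h <;> simp [h]
  refine ⟨?_, ?_, ?_⟩
  · rw [← Finset.sum_neg_distrib]
    apply Finset.sum_congr rfl
    intro H hH
    rw [hunion H hH]
    rcases hp C with h | h <;> simp [h] <;> ring
  · rw [← Finset.sum_neg_distrib]
    apply Finset.sum_le_sum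
    intro H hH
    have := mul_nonneg (mul_nonneg (hα H hH) (h0 H)) (h0 C)
    rw [hunion H hH]; nlinarith
  · rw [← Finset.sum_neg_distrib]
    apply Finset.sum_le_sum
    intro H hH
    rw [hunion H hH]
    have hnn : 0 ≤ (1 - ∏ j ∈ H, x j) * (1 - ∏ j ∈ C, x j) :=
      mul_nonneg (by linarith [h1 H]) (by linarith [h1 C])
    nlinarith [hα H hH]
end

section
/- Let n ≥ 2, let i ≠ j be indices in {1,…,n}, and let A, B : {0,1}^n → ℝ where A does not depend on the i-th and j-th coordinates. Suppose f : {0,1}^n → ℝ satisfies f(x) = x_i x_j A(x) + B(x) for all x ∈ {0,1}^n, and let M be a real number with M > max_{x∈{0,1}^n} |A(x)|. Define g : {0,1}^n × {0,1} → ℝ by g(x,w) = w·A(x) + B(x) + M·(x_i x_j − 2 x_i w − 2 x_j w + 3 w). Then min over (x,w) ∈ {0,1}^n × {0,1} of g(x,w) equals min over x ∈ {0,1}^n of f(x), and moreover g(x,w) ≥ f(x) for all x and w, with equality when w = x_i x_j. -/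
/-- Correctness of Rosenberg's substitution. `A` does not depend on the `i`-th and
`j`-th coordinates, `f(x) = x_i x_j A(x) + B(x)`, and `M > max |A|` over binary
points. Then `g(x,w) = w A(x) + B(x) + M (x_i x_j − 2 x_i w − 2 x_j w + 3w)`
has the same minimum over binary `(x,w)` as `f` over binary `x`; moreover
`g(x,w) ≥ f(x)` for all binary `x` and `w ∈ {0,1}`, with equality when `w = x_i x_j`. -/
theorem rosenberg_substitution
    (n : ℕ) (hn : 2 ≤ n) (i j : Fin n) (hij : i ≠ j)
    (A B f : (Fin n → ℝ) → ℝ)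
    (hA : ∀ x x' : Fin n → ℝ, (∀ k, k ≠ i → k ≠ j → x k = x' k) → A x = A x')
    (hf : ∀ x, f x = x i * x j * A x + B x)
    (M : ℝ) (hM : ∀ x : Fin n → ℝ, (∀ k, x k = 0 ∨ x k = 1) → |A x| < M)
    (g : (Fin n → ℝ) → ℝ → ℝ)
    (hg : ∀ x w, g x w = w * A x + B x
      + M * (x i * x j - 2 * x i * w - 2 * x j * w + 3 * w)) :
    sInf {s : ℝ | ∃ x : Fin n → ℝ, ∃ w : ℝ, (∀ k, x k = 0 ∨ x k = 1) ∧
        (w = 0 ∨ w = 1) ∧ s = g x w}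
      = sInf {s : ℝ | ∃ x : Fin n → ℝ, (∀ k, x k = 0 ∨ x k = 1) ∧ s = f x}
    ∧ (∀ x : Fin n → ℝ, (∀ k, x k = 0 ∨ x k = 1) → ∀ w : ℝ, (w = 0 ∨ w = 1) →
        f x ≤ g x w)
    ∧ (∀ x : Fin n → ℝ, (∀ k, x k = 0 ∨ x k = 1) → g x (x i * x j) = f x) := by
  have hbinfin : Set.Finite {x : Fin n → ℝ | ∀ k, x k = 0 ∨ x k = 1} := by
    apply Set.Finite.subset (Set.Finite.pi (fun _ : Fin n =>
      (Set.finite_singleton (1 : ℝ)).insert 0))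
    intro x hx k _
    rcases hx k with h | h <;> simp [h]
  -- key inequality
  have hkey : ∀ x : Fin n → ℝ, (∀ k, x k = 0 ∨ x k = 1) → ∀ w : ℝ,
      (w = 0 ∨ w = 1) → f x ≤ g x w := by
    intro x hx w hw
    have hA' := abs_lt.mp (hM x hx)
    rw [hf, hg]
    rcases hx i with hi | hi <;> rcases hx j with hj | hj <;>
      rcases hw with hw | hw <;> rw [hi, hj, hw] <;> ring_nf <;>
      nlinarith [hA'.1, hA'.2]
  have heq : ∀ x : Fin n → ℝ, (∀ k, x k = 0 ∨ x k = 1) →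
      g x (x i * x j) = f x := by
    intro x hx
    rw [hf, hg]
    rcases hx i with hi | hi <;> rcases hx j with hj | hj <;>
      rw [hi, hj] <;> ring
  refine ⟨?_, hkey, heq⟩
  set Sg := {s : ℝ | ∃ x : Fin n → ℝ, ∃ w : ℝ, (∀ k, x k = 0 ∨ x k = 1) ∧
      (w = 0 ∨ w = 1) ∧ s = g x w} with hSg
  set Sf := {s : ℝ | ∃ x : Fin n → ℝ, (∀ k, x k = 0 ∨ x k = 1) ∧ s = f x}
    with hSf
  have hSgfin : Sg.Finite := by
    apply Set.Finite.subset
      ((hbinfin.prod ((Set.finite_singleton (1 : ℝ)).insert 0)).image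
        (fun p => g p.1 p.2))
    rintro s ⟨x, w, hx, hw, rfl⟩
    exact ⟨(x, w), ⟨hx, by rcases hw with h | h <;> simp [h]⟩, rfl⟩
  have hSffin : Sf.Finite := by
    apply Set.Finite.subset (hbinfin.image f)
    rintro s ⟨x, hx, rfl⟩
    exact ⟨x, hx, rfl⟩
  have hSfne : Sf.Nonempty := ⟨f (fun _ => 0), fun _ => 0, fun _ => Or.inl rfl, rfl⟩
  have hSgne : Sg.Nonempty :=
    ⟨g (fun _ => 0) 0, fun _ => 0, 0, fun _ => Or.inl rfl, Or.inl rfl, rfl⟩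
  apply le_antisymm
  · apply csInf_le_csInf hSgfin.bddBelow hSfne
    rintro s ⟨x, hx, rfl⟩
    exact ⟨x, x i * x j, hx, by rcases hx i with h | h <;> rcases hx j with h' | h' <;>
      simp [h, h'], (heq x hx).symm⟩
  · apply le_csInf hSgne
    rintro s ⟨x, w, hx, hw, rfl⟩
    exact le_trans (csInf_le hSffin.bddBelow ⟨x, hx, rfl⟩) (hkey x hx w hw)
end

section
/- For every positive integer d and every x ∈ {0,1}^d, −∏_{j=1}^d x_j = min over w ∈ {0,1} of w·((d−1) − Σ_{j=1}^d x_j). -/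
/-- Freedman–Drineas quadratization of a negative monomial:
`−∏_{j=1}^d x_j = min_{w∈{0,1}} w·((d−1) − ∑_{j=1}^d x_j)`.
The minimum over the single binary variable `w` is written as the real
minimum of the expression at `w = 0` and at `w = 1`. -/
theorem freedman_drineas_negative_monomial
    (d : ℕ) (hd : 0 < d) (x : Fin d → ℝ) (hx : ∀ j, x j = 0 ∨ x j = 1) :
    -(∏ j, x j) =
      min ((0 : ℝ) * (((d : ℝ) - 1) - ∑ j, x j))
          ((1 : ℝ) * (((d : ℝ) - 1) - ∑ j, x j)) := by
  rw [zero_mul, one_mul]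
  by_cases h : ∀ j, x j = 1
  · have hp : ∏ j, x j = 1 := Finset.prod_eq_one (fun j _ => h j)
    have hs : ∑ j, x j = d := by
      rw [Finset.sum_congr rfl (fun j _ => h j)]
      simp
    rw [hp, hs, min_eq_right (by
      have : (1:ℝ) ≤ d := by exact_mod_cast hd
      linarith)]
    ring
  · push_neg at h
    obtain ⟨j0, hj0⟩ := h
    have hx0 : x j0 = 0 := (hx j0).resolve_right hj0
    have hp : ∏ j, x j = 0 := Finset.prod_eq_zero (Finset.mem_univ j0) hx0
    have hs : ∑ j, x j ≤ (d : ℝ) - 1 := by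
      have : ∑ j, x j ≤ ∑ j, (if j = j0 then 0 else 1 : ℝ) := by
        apply Finset.sum_le_sum
        intro i _
        by_cases hi : i = j0
        · simp [hi, hx0]
        · simp [hi]; rcases hx i with h | h <;> simp [h]
      have h2 : (∑ j, (if j = j0 then (0:ℝ) else 1)) = (d : ℝ) - 1 := by
        have : (∑ j, (if j = j0 then (0:ℝ) else 1)) =
            (∑ j : Fin d, (1 : ℝ)) - ∑ j, (if j = j0 then (1:ℝ) else 0) := by
          rw [← Finset.sum_sub_distrib]
          apply Finset.sum_congr rfl
          intro i _
          by_cases hi : i = j0 <;> simp [hi]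
        simp [this, Finset.sum_ite_eq']
      linarith
    rw [hp, min_eq_left (by linarith)]
    ring
end

section
/- For every integer d ≥ 3 and every x ∈ {0,1}^d, ∏_{j=1}^d x_j − x_{d−1} x_d = −Σ_{i=1}^{d−2} (1−x_i) ∏_{j=i+1}^d x_j = min over w ∈ {0,1}^{d−2} of Σ_{i=1}^{d−2} w_i·( d − i − (1−x_i) − Σ_{j=i+1}^d x_j ). -/
lemma prod_binary {x : ℕ → ℝ} (hx : ∀ j, x j = 0 ∨ x j = 1) (s : Finset ℕ) :
    (∏ j ∈ s, x j) = 0 ∨ (∏ j ∈ s, x j) = 1 := by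
  induction s using Finset.induction with
  | empty => right; simp
  | @insert a s' ha ih =>
    rw [Finset.prod_insert ha]
    rcases hx a with h1 | h1 <;> rcases ih with h2 | h2 <;> simp [h1, h2]

lemma prod_Icc_split {x : ℕ → ℝ} {i N : ℕ} (h : i ≤ N) :
    (∏ j ∈ Finset.Icc i N, x j) = x i * ∏ j ∈ Finset.Icc (i + 1) N, x j := by
  rw [Finset.Icc_eq_cons_Ioc h, Finset.prod_cons, Finset.Icc_add_one_left_eq_Ioc]

lemma tele_sum (F : ℕ → ℝ) (n : ℕ) :
    ∑ i ∈ Finset.Icc 1 n, (F (i + 1) - F i) = F (n + 1) - F 1 := by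
  induction n with
  | zero => simp
  | succ k ih => rw [Finset.sum_Icc_succ_top (by omega), ih]; ring

/-- Quadratization of a positive monomial of degree `d ≥ 3` using `d−2` new
variables. Variables are indexed by `1,…,d` (modeled as `x : ℕ → ℝ` with ranges
`Finset.Icc`). The identity states
`∏_{j=1}^d x_j − x_{d−1} x_d = −∑_{i=1}^{d−2} (1−x_i) ∏_{j=i+1}^d x_j`
and that this quantity is the minimum over `w ∈ {0,1}^{d−2}` of
`∑_{i=1}^{d−2} w_i (d − i − (1−x_i) − ∑_{j=i+1}^d x_j)`. -/
theorem positive_monomial_telescoping_quadratization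
    (d : ℕ) (hd : 3 ≤ d) (x : ℕ → ℝ) (hx : ∀ j, x j = 0 ∨ x j = 1) :
    ((∏ j ∈ Finset.Icc 1 d, x j) - x (d - 1) * x d
      = -∑ i ∈ Finset.Icc 1 (d - 2), (1 - x i) * ∏ j ∈ Finset.Icc (i + 1) d, x j)
    ∧ IsLeast
        {s : ℝ | ∃ w : ℕ → ℝ, (∀ i, w i = 0 ∨ w i = 1) ∧
          s = ∑ i ∈ Finset.Icc 1 (d - 2),
                w i * ((d : ℝ) - (i : ℝ) - (1 - x i) - ∑ j ∈ Finset.Icc (i + 1) d, x j)}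
        ((∏ j ∈ Finset.Icc 1 d, x j) - x (d - 1) * x d) := by
  obtain ⟨m, rfl⟩ : ∃ m, d = m + 2 := ⟨d - 2, by omega⟩
  have hm : 1 ≤ m := by omega
  have hsub2 : m + 2 - 2 = m := by omega
  have hsub1 : m + 2 - 1 = m + 1 := by omega
  rw [hsub2, hsub1]
  -- telescoping identity
  have key : ∑ i ∈ Finset.Icc 1 m, (1 - x i) * ∏ j ∈ Finset.Icc (i + 1) (m + 2), x j
      = (∏ j ∈ Finset.Icc (m + 1) (m + 2), x j) - ∏ j ∈ Finset.Icc 1 (m + 2), x j := by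
    have h1 : ∀ i ∈ Finset.Icc 1 m,
        (1 - x i) * ∏ j ∈ Finset.Icc (i + 1) (m + 2), x j
          = (∏ j ∈ Finset.Icc (i + 1) (m + 2), x j) - ∏ j ∈ Finset.Icc i (m + 2), x j := by
      intro i hi
      simp only [Finset.mem_Icc] at hi
      rw [prod_Icc_split (x := x) (i := i) (N := m + 2) (by omega)]
      ring
    rw [Finset.sum_congr rfl h1, tele_sum (fun i => ∏ j ∈ Finset.Icc i (m + 2), x j) m]
  have hFtop : (∏ j ∈ Finset.Icc (m + 1) (m + 2), x j) = x (m + 1) * x (m + 2) := by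
    rw [prod_Icc_split (by omega), prod_Icc_split (by omega)]
    simp
  have part1 : (∏ j ∈ Finset.Icc 1 (m + 2), x j) - x (m + 1) * x (m + 2)
      = -∑ i ∈ Finset.Icc 1 m, (1 - x i) * ∏ j ∈ Finset.Icc (i + 1) (m + 2), x j := by
    rw [key, hFtop]; ring
  -- pointwise facts
  have hptS : ∀ i, 1 ≤ i → i ≤ m → (∀ j ∈ Finset.Icc (i + 1) (m + 2), x j = 1) →
      (∑ j ∈ Finset.Icc (i + 1) (m + 2), x j) = (m : ℝ) + 2 - i := by
    intro i hi1 hi2 hall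
    rw [Finset.sum_congr rfl hall, Finset.sum_const, Nat.card_Icc]
    have h3 : m + 2 + 1 - (i + 1) = m + 2 - i := by omega
    rw [h3, nsmul_eq_mul, mul_one]
    push_cast [Nat.cast_sub (show i ≤ m + 2 by omega)]
    ring
  refine ⟨part1, ?_, ?_⟩
  · -- membership: choose w i = (1 - x i) * Q i
    refine ⟨fun i => (1 - x i) * ∏ j ∈ Finset.Icc (i + 1) (m + 2), x j, ?_, ?_⟩
    · intro i
      rcases hx i with h1 | h1 <;>
        rcases prod_binary hx (Finset.Icc (i + 1) (m + 2)) with h2 | h2 <;>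
        simp [h1, h2]
    · rw [part1, ← Finset.sum_neg_distrib]
      refine Finset.sum_congr rfl ?_
      intro i hi
      simp only [Finset.mem_Icc] at hi
      beta_reduce
      by_cases hall : ∀ j ∈ Finset.Icc (i + 1) (m + 2), x j = 1
      · have hQ : (∏ j ∈ Finset.Icc (i + 1) (m + 2), x j) = 1 := Finset.prod_eq_one hall
        rw [hQ, hptS i hi.1 hi.2 hall]
        rcases hx i with h1 | h1 <;> rw [h1] <;> push_cast <;> ring
      · push_neg at hall
        obtain ⟨j₀, hj₀s, hj₀⟩ := hall
        have hQ : (∏ j ∈ Finset.Icc (i + 1) (m + 2), x j) = 0 :=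
          Finset.prod_eq_zero hj₀s ((hx j₀).resolve_right hj₀)
        rw [hQ]; ring
  · -- lower bound
    rintro v ⟨w, hw, rfl⟩
    rw [part1, ← Finset.sum_neg_distrib]
    refine Finset.sum_le_sum ?_
    intro i hi
    simp only [Finset.mem_Icc] at hi
    by_cases hall : ∀ j ∈ Finset.Icc (i + 1) (m + 2), x j = 1
    · have hQ : (∏ j ∈ Finset.Icc (i + 1) (m + 2), x j) = 1 := Finset.prod_eq_one hall
      rw [hQ, hptS i hi.1 hi.2 hall]
      rcases hx i with h1 | h1 <;> rcases hw i with h2 | h2 <;> rw [h1, h2] <;>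
        push_cast <;> ring_nf <;> norm_num
    · push_neg at hall
      obtain ⟨j₀, hj₀s, hj₀⟩ := hall
      have hj₀0 : x j₀ = 0 := (hx j₀).resolve_right hj₀
      have hQ : (∏ j ∈ Finset.Icc (i + 1) (m + 2), x j) = 0 :=
        Finset.prod_eq_zero hj₀s hj₀0
      rw [hQ]
      have hSle : (∑ j ∈ Finset.Icc (i + 1) (m + 2), x j) ≤ (m : ℝ) + 1 - i := by
        rw [← Finset.add_sum_erase _ x hj₀s, hj₀0, zero_add]
        calc ∑ j ∈ (Finset.Icc (i + 1) (m + 2)).erase j₀, x j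
            ≤ ∑ j ∈ (Finset.Icc (i + 1) (m + 2)).erase j₀, 1 := by
              refine Finset.sum_le_sum ?_
              intro j _
              rcases hx j with h | h <;> rw [h] <;> norm_num
          _ = (((Finset.Icc (i + 1) (m + 2)).erase j₀).card : ℝ) := by simp
          _ ≤ (m : ℝ) + 1 - i := by
              rw [Finset.card_erase_of_mem hj₀s, Nat.card_Icc]
              have h3 : m + 2 + 1 - (i + 1) - 1 = m + 1 - i := by omega
              rw [h3]
              push_cast [Nat.cast_sub (show i ≤ m + 1 by omega)]
              norm_num
      have hxi : (0 : ℝ) ≤ 1 - x i ∧ x i ≥ 0 := by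
        rcases hx i with h | h <;> rw [h] <;> norm_num
      rcases hw i with h2 | h2 <;> rw [h2]
      · simp
      · push_cast
        obtain ⟨hxi1, hxi2⟩ := hxi
        nlinarith
end

section
/- For every positive integer d and every x ∈ {0,1}^d, −∏_{j=1}^d (1−x_j) = min over w ∈ {0,1} of w·((d−1) − Σ_{j=1}^d (1−x_j)) = −1 + Σ_{j=1}^d x_j + min over w' ∈ {0,1} of w'·(1 − Σ_{j=1}^d x_j). -/
/-- Submodular quadratization of a negative monomial in negated literals:
`−∏_{j=1}^d (1−x_j) = min_{w∈{0,1}} w·((d−1) − ∑_j (1−x_j))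
 = −1 + ∑_j x_j + min_{w'∈{0,1}} w'·(1 − ∑_j x_j)`.
Each minimum over a single binary variable is written as the real minimum of the
expression at `0` and at `1`. -/
theorem freedman_drineas_negated_monomial
    (d : ℕ) (hd : 0 < d) (x : Fin d → ℝ) (hx : ∀ j, x j = 0 ∨ x j = 1) :
    (-(∏ j, (1 - x j)) =
      min ((0 : ℝ) * (((d : ℝ) - 1) - ∑ j, (1 - x j)))
          ((1 : ℝ) * (((d : ℝ) - 1) - ∑ j, (1 - x j))))
    ∧ (-(∏ j, (1 - x j)) =
      -1 + (∑ j, x j) +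
        min ((0 : ℝ) * (1 - ∑ j, x j)) ((1 : ℝ) * (1 - ∑ j, x j))) := by
  have hsumsub : (∑ j, (1 - x j)) = (d : ℝ) - ∑ j, x j := by
    rw [Finset.sum_sub_distrib, Finset.sum_const, Finset.card_univ, Fintype.card_fin,
      nsmul_eq_mul, mul_one]
  by_cases h : ∀ j, x j = 0
  · -- all zero: product = 1, sum = 0
    have hp : (∏ j, (1 - x j)) = 1 := by
      apply Finset.prod_eq_one; intro j _; rw [h j]; ring
    have hs : (∑ j, x j) = 0 := by
      apply Finset.sum_eq_zero; intro j _; exact h j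
    have hd1 : (1 : ℝ) ≤ (d : ℝ) := by exact_mod_cast hd
    rw [hp, hs, hsumsub, hs]
    constructor
    · rw [min_eq_right (by linarith), one_mul]; ring
    · rw [min_eq_left (by linarith)]; ring
  · -- some x j = 1: product = 0, sum ≥ 1
    push_neg at h
    obtain ⟨j0, hj0⟩ := h
    have hj1 : x j0 = 1 := (hx j0).resolve_left hj0
    have hp : (∏ j, (1 - x j)) = 0 :=
      Finset.prod_eq_zero (Finset.mem_univ j0) (by rw [hj1]; ring)
    have hs1 : (1 : ℝ) ≤ ∑ j, x j := by
      have := Finset.single_le_sum (f := x) (fun i _ => by rcases hx i with h | h <;> simp [h])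
        (Finset.mem_univ j0)
      linarith [hj1 ▸ this]
    rw [hp, hsumsub]
    constructor
    · rw [min_eq_left (by linarith)]; ring
    · rw [min_eq_right (by linarith)]; ring
end

section
/- Let S_0 and S_1 be disjoint finite subsets of {1,…,n}. Then for every x ∈ {0,1}^n, −∏_{j∈S_0}(1−x_j)·∏_{j∈S_1} x_j = min over (u,v) ∈ {0,1}×{0,1} of [ −u·v + u·Σ_{j∈S_0} x_j + v·Σ_{j∈S_1} (1−x_j) ]. -/
lemma binary_prod_cases {n : ℕ} (S : Finset (Fin n)) (y : Fin n → ℝ)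
    (hy : ∀ j, y j = 0 ∨ y j = 1) :
    ((∏ j ∈ S, y j) = 1 ∧ (∑ j ∈ S, (1 - y j)) = 0) ∨
    ((∏ j ∈ S, y j) = 0 ∧ 1 ≤ ∑ j ∈ S, (1 - y j)) := by
  by_cases h : ∀ j ∈ S, y j = 1
  · left
    constructor
    · exact Finset.prod_eq_one h
    · refine Finset.sum_eq_zero fun j hj => by rw [h j hj]; ring
  · right
    push_neg at h
    obtain ⟨j, hjS, hj⟩ := h
    have hj0 : y j = 0 := (hy j).resolve_right hj
    constructor
    · exact Finset.prod_eq_zero hjS hj0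
    · have : (1 : ℝ) - y j = 1 := by rw [hj0]; ring
      calc (1:ℝ) = 1 - y j := this.symm
        _ ≤ ∑ i ∈ S, (1 - y i) := by
            apply Finset.single_le_sum (f := fun i => 1 - y i) _ hjS
            intro i _
            rcases hy i with h | h <;> simp [h]

/-- Type-I transformation: for disjoint `S₀, S₁ ⊆ [n]` and binary `x`,
`−∏_{j∈S₀}(1−x_j)·∏_{j∈S₁}x_j` is the minimum over binary `(u,v)` of
`−uv + u·∑_{j∈S₀} x_j + v·∑_{j∈S₁}(1−x_j)`. -/
theorem type_one_transformation
    (n : ℕ) (S₀ S₁ : Finset (Fin n)) (hdisj : Disjoint S₀ S₁)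
    (x : Fin n → ℝ) (hx : ∀ j, x j = 0 ∨ x j = 1) :
    IsLeast
      {s : ℝ | ∃ u v : ℝ, (u = 0 ∨ u = 1) ∧ (v = 0 ∨ v = 1) ∧
        s = -(u * v) + u * (∑ j ∈ S₀, x j) + v * (∑ j ∈ S₁, (1 - x j))}
      (-((∏ j ∈ S₀, (1 - x j)) * ∏ j ∈ S₁, x j)) := by
  have h0 := binary_prod_cases S₀ (fun j => 1 - x j)
    (fun j => by rcases hx j with h | h <;> simp [h])
  simp only [sub_sub_cancel] at h0
  have h1 := binary_prod_cases S₁ x hx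
  have hA : (0:ℝ) ≤ ∑ j ∈ S₀, x j :=
    Finset.sum_nonneg fun j _ => by rcases hx j with h | h <;> simp [h]
  have hB : (0:ℝ) ≤ ∑ j ∈ S₁, (1 - x j) :=
    Finset.sum_nonneg fun j _ => by rcases hx j with h | h <;> simp [h]
  constructor
  · -- membership
    rcases h0 with ⟨hP, hAs⟩ | ⟨hP, _⟩
    · rcases h1 with ⟨hQ, hBs⟩ | ⟨hQ, _⟩
      · exact ⟨1, 1, Or.inr rfl, Or.inr rfl, by rw [hP, hQ, hAs, hBs]; ring⟩
      · exact ⟨0, 0, Or.inl rfl, Or.inl rfl, by rw [hP, hQ]; ring⟩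
    · exact ⟨0, 0, Or.inl rfl, Or.inl rfl, by rw [hP]; ring⟩
  · -- lower bound
    rintro s ⟨u, v, hu, hv, rfl⟩
    have hu0 : (0:ℝ) ≤ u := by rcases hu with h | h <;> simp [h]
    have hu1 : u ≤ 1 := by rcases hu with h | h <;> simp [h]
    have hv0 : (0:ℝ) ≤ v := by rcases hv with h | h <;> simp [h]
    have hv1 : v ≤ 1 := by rcases hv with h | h <;> simp [h]
    rcases h0 with ⟨hP, hAs⟩ | ⟨hP, hAs⟩
    · rcases h1 with ⟨hQ, hBs⟩ | ⟨hQ, hBs⟩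
      · rw [hP, hQ, hAs, hBs]
        nlinarith
      · rw [hP, hQ]
        nlinarith [mul_nonneg hu0 hA, mul_nonneg hv0 hB, mul_le_one₀ hu1 hv0 hv1,
          mul_le_of_le_one_left hv0 hu1]
    · rw [hP]
      nlinarith [mul_nonneg hu0 hA, mul_nonneg hv0 hB, mul_le_of_le_one_right hu0 hv1]
end

section
/- Let k ≥ 1 and d = 2k+2. For every x ∈ {0,1}^d, ∏_{j=1}^d x_j = S_2 + min over w ∈ {0,1}^k of [ Σ_{j=1}^k (4j−1)·w_j − 2·(Σ_{j=1}^k w_j)·(Σ_{j=1}^d x_j) ], where S_2 = Σ_{1≤i<j≤d} x_i x_j. -/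
private lemma ishikawa_key (k N t : ℕ) (hN : N ≤ 2*k+2) (ht : t = min (N/2) k) :
    ((N:ℝ)*N - N)/2 + ((2*t*t + t) - 2*t*N) = if N = 2*k+2 then 1 else 0 := by
  rcases eq_or_ne N (2*k+2) with h | h
  · have htk : t = k := by omega
    subst htk; subst h; rw [if_pos rfl]; push_cast; ring
  · rw [if_neg h]
    rcases Nat.even_or_odd N with ⟨m, hm⟩ | ⟨m, hm⟩
    · have htm : t = m := by omega
      subst htm; subst hm; push_cast; ring
    · have htm : t = m := by omega
      subst htm; subst hm; push_cast; ring

private lemma ishikawa_gauss (t : ℕ) :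
    ∑ m ∈ Finset.range t, (4*(m:ℝ)+3) = 2*t*t + t := by
  induction t with
  | zero => simp
  | succ n ih => rw [Finset.sum_range_succ, ih]; push_cast; ring

private lemma ishikawa_sum_ite (k t : ℕ) (f : ℕ → ℝ) (ht : t ≤ k) :
    ∑ m ∈ Finset.range k, (if m < t then f m else 0) = ∑ m ∈ Finset.range t, f m := by
  rw [← Finset.sum_filter]
  congr 1
  ext m
  simp only [Finset.mem_filter, Finset.mem_range]
  omega

/-- Ishikawa's quadratization of a positive monomial of even degree `d = 2k+2`:
`∏_{j=1}^d x_j = S₂ + min_{w∈{0,1}^k} [∑_{j=1}^k (4j−1) w_j − 2 (∑_j w_j)(∑_j x_j)]`,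
where `S₂ = ∑_{1≤i<j≤d} x_i x_j`. Indices `j = 1,…,k` are modeled by `Fin k`
via `j ↦ j.val + 1`. -/
theorem ishikawa_even
    (k : ℕ) (hk : 1 ≤ k) (d : ℕ) (hd : d = 2 * k + 2)
    (x : Fin d → ℝ) (hx : ∀ j, x j = 0 ∨ x j = 1) :
    IsLeast
      {s : ℝ | ∃ w : Fin k → ℝ, (∀ i, w i = 0 ∨ w i = 1) ∧
        s = (∑ i : Fin d, ∑ j : Fin d, if i < j then x i * x j else 0)
            + ((∑ j : Fin k, (4 * ((j : ℕ) + 1 : ℝ) - 1) * w j)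
               - 2 * (∑ j : Fin k, w j) * (∑ j : Fin d, x j))}
      (∏ j, x j) := by
  subst hd
  set N : ℕ := (Finset.univ.filter (fun j => x j = 1)).card with hNdef
  have hNle : N ≤ 2*k+2 := by
    have := Finset.card_filter_le Finset.univ (fun j => x j = 1)
    simpa using this
  have hxsq : ∀ j, x j * x j = x j := by
    intro j; rcases hx j with h | h <;> rw [h] <;> ring
  have hsum : (∑ j, x j) = (N : ℝ) := by
    rw [← Finset.sum_filter_add_sum_filter_not Finset.univ (fun j => x j = 1)]
    have h1 : ∑ j ∈ Finset.univ.filter (fun j => x j = 1), x j = (N : ℝ) := by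
      rw [Finset.sum_congr rfl (fun j hj => (Finset.mem_filter.mp hj).2)]
      simp [hNdef]
    have h2 : ∑ j ∈ Finset.univ.filter (fun j => ¬ x j = 1), x j = 0 := by
      apply Finset.sum_eq_zero
      intro j hj
      rcases hx j with h | h
      · exact h
      · exact absurd h (Finset.mem_filter.mp hj).2
    rw [h1, h2, add_zero]
  -- S₂ identity
  have hS2 : (∑ i : Fin (2*k+2), ∑ j : Fin (2*k+2), if i < j then x i * x j else 0)
      = ((N:ℝ)*N - N)/2 := by
    have tri : ∀ i j : Fin (2*k+2),
        (if i < j then x i * x j else 0) + (if j < i then x i * x j else 0)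
          + (if i = j then x i * x j else 0) = x i * x j := by
      intro i j
      rcases lt_trichotomy i j with h | h | h
      · simp [h, asymm h, h.ne]
      · simp [h, lt_irrefl]
      · simp [h, asymm h, h.ne']
    have htot : (∑ j, x j) * (∑ j, x j)
        = (∑ i : Fin (2*k+2), ∑ j, if i < j then x i * x j else 0)
          + (∑ i : Fin (2*k+2), ∑ j, if j < i then x i * x j else 0)
          + (∑ i : Fin (2*k+2), x i) := by
      rw [Finset.sum_mul_sum]
      have hrow : ∀ i : Fin (2*k+2), ∑ j : Fin (2*k+2), x i * x j
          = (∑ j : Fin (2*k+2), if i < j then x i * x j else 0)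
            + (∑ j : Fin (2*k+2), if j < i then x i * x j else 0) + x i := by
        intro i
        have h1 : ∑ j : Fin (2*k+2), x i * x j
            = ∑ j : Fin (2*k+2), ((if i < j then x i * x j else 0)
              + (if j < i then x i * x j else 0) + (if i = j then x i * x j else 0)) :=
          Finset.sum_congr rfl (fun j _ => (tri i j).symm)
        rw [h1, Finset.sum_add_distrib, Finset.sum_add_distrib,
          Finset.sum_ite_eq Finset.univ i (fun j => x i * x j)]
        simp [hxsq i]
      rw [Finset.sum_congr rfl (fun i _ => hrow i), Finset.sum_add_distrib,
        Finset.sum_add_distrib]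
    have hswap : (∑ i : Fin (2*k+2), ∑ j, if j < i then x i * x j else 0)
        = (∑ i : Fin (2*k+2), ∑ j, if i < j then x i * x j else 0) := by
      rw [Finset.sum_comm]
      apply Finset.sum_congr rfl; intro i _
      apply Finset.sum_congr rfl; intro j _
      split_ifs <;> ring
    rw [hswap, hsum] at htot
    linarith [htot]
  -- product
  have hprod : (∏ j, x j) = if N = 2*k+2 then 1 else 0 := by
    rcases eq_or_ne N (2*k+2) with h | h
    · rw [if_pos h]
      have huniv : Finset.univ.filter (fun j => x j = 1) = Finset.univ := by
        apply Finset.eq_univ_of_card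
        simpa using h
      apply Finset.prod_eq_one
      intro j _
      have hj : j ∈ Finset.univ.filter (fun j => x j = 1) := by
        rw [huniv]; exact Finset.mem_univ j
      exact (Finset.mem_filter.mp hj).2
    · rw [if_neg h]
      obtain ⟨j, hj⟩ : ∃ j, x j = 0 := by
        by_contra hc
        push_neg at hc
        have hall : ∀ j, x j = 1 := fun j => (hx j).resolve_left (hc j)
        apply h
        rw [hNdef, Finset.filter_true_of_mem (fun j _ => hall j)]
        simp
      exact Finset.prod_eq_zero (Finset.mem_univ j) hj
  set t : ℕ := min (N/2) k with htdef
  have htk : t ≤ k := min_le_right _ _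
  set ws : Fin k → ℝ := fun j => if (j : ℕ) < t then 1 else 0 with hwsdef
  have hwsbin : ∀ i, ws i = 0 ∨ ws i = 1 := by
    intro i; by_cases h : (i : ℕ) < t <;> simp [hwsdef, h]
  have hws1 : (∑ j : Fin k, ws j) = (t : ℝ) := by
    simp only [hwsdef]
    rw [Fin.sum_univ_eq_sum_range (fun m => if m < t then (1:ℝ) else 0)]
    rw [ishikawa_sum_ite k t (fun _ => (1:ℝ)) htk]
    simp
  have hws2 : (∑ j : Fin k, (4 * ((j : ℕ) + 1 : ℝ) - 1) * ws j) = 2*t*t + t := by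
    simp only [hwsdef, mul_ite, mul_one, mul_zero]
    rw [Fin.sum_univ_eq_sum_range (fun m => if m < t then 4*((m:ℕ)+1:ℝ)-1 else 0)]
    rw [ishikawa_sum_ite k t (fun m => 4*((m:ℕ)+1:ℝ)-1) htk]
    rw [← ishikawa_gauss t]
    apply Finset.sum_congr rfl
    intro m _
    push_cast
    ring
  -- value at ws equals the product
  have hval : (∑ i : Fin (2*k+2), ∑ j, if i < j then x i * x j else 0)
      + ((∑ j : Fin k, (4 * ((j : ℕ) + 1 : ℝ) - 1) * ws j)
         - 2 * (∑ j : Fin k, ws j) * (∑ j, x j)) = ∏ j, x j := by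
    rw [hS2, hws1, hws2, hsum, hprod]
    linarith [ishikawa_key k N t hNle htdef]
  constructor
  · exact ⟨ws, hwsbin, hval.symm⟩
  · rintro s ⟨w, hwbin, rfl⟩
    rw [← hval]
    have hcmp : (∑ j : Fin k, (4 * ((j : ℕ) + 1 : ℝ) - 1) * ws j)
        - 2 * (∑ j : Fin k, ws j) * (∑ j, x j)
        ≤ (∑ j : Fin k, (4 * ((j : ℕ) + 1 : ℝ) - 1) * w j)
        - 2 * (∑ j : Fin k, w j) * (∑ j, x j) := by
      rw [hsum]
      have expand : ∀ v : Fin k → ℝ,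
          (∑ j : Fin k, (4 * ((j : ℕ) + 1 : ℝ) - 1) * v j)
            - 2 * (∑ j : Fin k, v j) * (N:ℝ)
          = ∑ j : Fin k, ((4 * ((j : ℕ) + 1 : ℝ) - 1) - 2*N) * v j := by
        intro v
        rw [show (2 * ∑ j : Fin k, v j) * (N:ℝ) = ∑ j : Fin k, 2*(N:ℝ)*v j from by
          rw [Finset.mul_sum, Finset.sum_mul]
          exact Finset.sum_congr rfl (fun j _ => by ring)]
        rw [← Finset.sum_sub_distrib]
        exact Finset.sum_congr rfl (fun j _ => by ring)
      rw [expand ws, expand w]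
      apply Finset.sum_le_sum
      intro j _
      set c : ℝ := (4 * ((j : ℕ) + 1 : ℝ) - 1) - 2*N with hc
      by_cases hjt : (j : ℕ) < t
      · have hle : 2*((j:ℕ)+1) ≤ N := by omega
        have hcneg : c ≤ 0 := by
          have : (2*((j:ℕ)+1) : ℝ) ≤ (N:ℝ) := by exact_mod_cast hle
          rw [hc]; push_cast at this ⊢; linarith
        have : ws j = 1 := by simp [hwsdef, hjt]
        rw [this, mul_one]
        rcases hwbin j with h | h <;> rw [h] <;> linarith
      · have hjk : (j : ℕ) < k := j.isLt
        have hge : N + 1 ≤ 2*((j:ℕ)+1) := by omega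
        have hcpos : 0 ≤ c := by
          have : ((N:ℝ) + 1) ≤ (2*((j:ℕ)+1) : ℝ) := by exact_mod_cast hge
          rw [hc]; push_cast at this ⊢; linarith
        have : ws j = 0 := by simp [hwsdef, hjt]
        rw [this, mul_zero]
        rcases hwbin j with h | h <;> rw [h] <;> linarith
    linarith
end

section
/- Let k ≥ 1 and d = 2k+1. For every x ∈ {0,1}^d, ∏_{j=1}^d x_j = S_2 + min over w ∈ {0,1}^k of [ Σ_{j=1}^k (4j−1)·w_j − 2·(Σ_{j=1}^k w_j)·(Σ_{j=1}^d x_j) + w_k·( Σ_{j=1}^d x_j − d + 1 ) ], where S_2 = Σ_{1≤i<j≤d} x_i x_j. -/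
lemma gauss_aux (T : ℕ) (a : ℝ) :
    ∑ i ∈ Finset.range T, ((4*(i:ℝ)+3) - a) = 2*(T:ℝ)^2 + T - a*T := by
  induction T with
  | zero => simp
  | succ n ih => rw [Finset.sum_range_succ, ih]; push_cast; ring

/-- Ishikawa's quadratization of a positive monomial of odd degree `d = 2k+1`:
`∏_{j=1}^d x_j = S₂ + min_{w∈{0,1}^k} [∑_{j=1}^k (4j−1) w_j − 2 (∑_j w_j)(∑_j x_j)
 + w_k (∑_j x_j − d + 1)]`, where `S₂ = ∑_{1≤i<j≤d} x_i x_j`.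
Indices `j = 1,…,k` are modeled by `Fin k` via `j ↦ j.val + 1`, and `w_k` is the
last coordinate. -/
theorem ishikawa_odd
    (k : ℕ) (hk : 1 ≤ k) (d : ℕ) (hd : d = 2 * k + 1)
    (x : Fin d → ℝ) (hx : ∀ j, x j = 0 ∨ x j = 1) :
    IsLeast
      {s : ℝ | ∃ w : Fin k → ℝ, (∀ i, w i = 0 ∨ w i = 1) ∧
        s = (∑ i : Fin d, ∑ j : Fin d, if i < j then x i * x j else 0)
            + ((∑ j : Fin k, (4 * ((j : ℕ) + 1 : ℝ) - 1) * w j)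
               - 2 * (∑ j : Fin k, w j) * (∑ j : Fin d, x j)
               + w ⟨k - 1, by omega⟩ * ((∑ j : Fin d, x j) - (d : ℝ) + 1))}
      (∏ j, x j) := by
  obtain ⟨m, rfl⟩ : ∃ m, k = m + 1 := ⟨k - 1, by omega⟩
  subst hd
  classical
  set N : ℕ := (Finset.univ.filter (fun j : Fin (2*(m+1)+1) => x j = 1)).card with hNdef
  have hN : ((N : ℕ) : ℝ) = ∑ j, x j := by
    rw [show (∑ j, x j) = ∑ j, (if x j = 1 then (1:ℝ) else 0) from
      Finset.sum_congr rfl fun j _ => by rcases hx j with h | h <;> simp [h]]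
    rw [Finset.sum_boole]
  have hNle : N ≤ 2*(m+1)+1 := le_trans (Finset.card_filter_le _ _) (by simp)
  have hprod : (∏ j, x j) = if N = 2*(m+1)+1 then 1 else 0 := by
    by_cases h : ∀ j, x j = 1
    · have huniv : (Finset.univ.filter (fun j : Fin (2*(m+1)+1) => x j = 1)) = Finset.univ := by
        ext j; simp [h j]
      have hNv : N = 2*(m+1)+1 := by rw [hNdef, huniv]; simp
      simp [h, hNv]
    · push_neg at h
      obtain ⟨j, hj⟩ := h
      have hj0 : x j = 0 := (hx j).resolve_right hj
      have hne : N ≠ 2*(m+1)+1 := by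
        intro hEq
        have huniv : (Finset.univ.filter (fun j : Fin (2*(m+1)+1) => x j = 1)) = Finset.univ :=
          Finset.eq_univ_of_card _ (by rw [← hNdef, hEq]; simp)
        have hmem : j ∈ Finset.univ.filter (fun j : Fin (2*(m+1)+1) => x j = 1) := by
          rw [huniv]; exact Finset.mem_univ j
        exact hj (Finset.mem_filter.mp hmem).2
      rw [if_neg hne, Finset.prod_eq_zero (Finset.mem_univ j) hj0]
  set S2 : ℝ := ∑ i : Fin (2*(m+1)+1), ∑ j : Fin (2*(m+1)+1), if i < j then x i * x j else 0
    with hS2def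
  have hsq : ∀ j, x j * x j = x j := fun j => by rcases hx j with h | h <;> rw [h] <;> ring
  have h2S : ((N:ℝ)) * N = 2 * S2 + N := by
    rw [hN, Finset.sum_mul_sum]
    have key : ∀ i j : Fin (2*(m+1)+1), x i * x j =
        (if i < j then x i * x j else 0) + (if j < i then x i * x j else 0)
          + (if i = j then x i else 0) := by
      intro i j
      rcases lt_trichotomy i j with h | h | h
      · rw [if_pos h, if_neg (asymm h), if_neg (ne_of_lt h), add_zero, add_zero]
      · subst h
        rw [if_neg (lt_irrefl i), if_pos rfl, hsq, zero_add, zero_add]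
      · rw [if_neg (asymm h), if_pos h, if_neg (ne_of_gt h), zero_add, add_zero]
    rw [show (∑ i : Fin (2*(m+1)+1), ∑ j : Fin (2*(m+1)+1), x i * x j)
        = ∑ i : Fin (2*(m+1)+1), ∑ j : Fin (2*(m+1)+1),
          ((if i < j then x i * x j else 0) + (if j < i then x i * x j else 0)
            + (if i = j then x i else 0)) from
      Finset.sum_congr rfl fun i _ => Finset.sum_congr rfl fun j _ => key i j]
    simp only [Finset.sum_add_distrib]
    have e1 : (∑ i : Fin (2*(m+1)+1), ∑ j : Fin (2*(m+1)+1),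
        if j < i then x i * x j else 0) = S2 := by
      rw [Finset.sum_comm, hS2def]
      exact Finset.sum_congr rfl fun i _ => Finset.sum_congr rfl fun j _ => by
        by_cases h : i < j <;> simp [h, mul_comm]
    have e2 : (∑ i : Fin (2*(m+1)+1), ∑ j : Fin (2*(m+1)+1),
        if i = j then x i else 0) = ∑ j, x j := by
      exact Finset.sum_congr rfl fun i _ => by simp [Finset.sum_ite_eq]
    rw [e1, e2, hS2def, ← hN]
    ring
  set a : Fin (m+1) := ⟨m, Nat.lt_succ_self m⟩ with hadef
  set c : Fin (m+1) → ℝ := fun i =>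
    (4*((i:ℕ):ℝ)+3 - 2*N) + (if i = a then (N:ℝ) - (2*(m+1)+1 : ℕ) + 1 else 0) with hcdef
  have hW : ∀ w : Fin (m+1) → ℝ,
      (∑ j : Fin (m+1), (4 * ((j : ℕ) + 1 : ℝ) - 1) * w j)
        - 2 * (∑ j : Fin (m+1), w j) * (∑ j : Fin (2*(m+1)+1), x j)
        + w ⟨m + 1 - 1, by omega⟩ * ((∑ j : Fin (2*(m+1)+1), x j) - ((2*(m+1)+1 : ℕ) : ℝ) + 1)
      = ∑ i, c i * w i := by
    intro w
    have h1 : ∑ i, c i * w i = ∑ i : Fin (m+1), ((4 * (((i:ℕ) : ℝ) + 1) - 1) * w i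
        - 2*(N:ℝ)*w i
        + (if i = a then ((N:ℝ) - ((2*(m+1)+1 : ℕ) : ℝ) + 1) * w i else 0)) := by
      refine Finset.sum_congr rfl fun i _ => ?_
      by_cases h : i = a
      · rw [hcdef]; simp only [h, if_pos rfl]; push_cast; ring
      · rw [hcdef]; simp only [if_neg h]; push_cast; ring
    rw [h1, Finset.sum_add_distrib, Finset.sum_sub_distrib,
      Finset.sum_ite_eq' Finset.univ a]
    simp only [Finset.mem_univ, if_pos]
    rw [← Finset.mul_sum]
    rw [show (⟨m + 1 - 1, by omega⟩ : Fin (m+1)) = a from rfl]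
    rw [← hN]
    ring
  set M : ℝ := ∑ i, min 0 (c i) with hMdef
  have hKey : M = (∏ j, x j) - S2 := by
    set T : ℕ := min (N / 2) m with hTdef
    have hM1 : M = ∑ i ∈ Finset.range (m+1),
        min 0 ((4*(i:ℝ)+3 - 2*(N:ℝ)) + (if i = m then (N:ℝ) - ((2*(m+1)+1:ℕ):ℝ) + 1 else 0)) := by
      rw [hMdef]
      rw [← Fin.sum_univ_eq_sum_range (fun n : ℕ =>
          min 0 ((4*(n:ℝ)+3 - 2*(N:ℝ)) + (if n = m then (N:ℝ) - ((2*(m+1)+1:ℕ):ℝ) + 1 else 0)))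
          (m+1)]
      refine Finset.sum_congr rfl fun i _ => ?_
      rw [hcdef]
      simp only [hadef, Fin.ext_iff, Fin.val_mk]
    rw [hM1, Finset.sum_range_succ]
    have hmain : ∑ i ∈ Finset.range m,
        min 0 ((4*(i:ℝ)+3 - 2*(N:ℝ)) + (if i = m then (N:ℝ) - ((2*(m+1)+1:ℕ):ℝ) + 1 else 0))
        = 2*(T:ℝ)^2 + T - 2*N*T := by
      have hterm : ∀ i ∈ Finset.range m,
          min 0 ((4*(i:ℝ)+3 - 2*(N:ℝ)) + (if i = m then (N:ℝ) - ((2*(m+1)+1:ℕ):ℝ) + 1 else 0))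
          = if i ∈ Finset.range T then ((4*(i:ℝ)+3) - 2*(N:ℝ)) else 0 := by
        intro i hi
        rw [Finset.mem_range] at hi
        rw [if_neg (by omega), add_zero]
        by_cases hiT : i < T
        · rw [if_pos (Finset.mem_range.mpr hiT)]
          have h1 : 4*i+4 ≤ 2*N := by omega
          have h2 : (4*(i:ℝ)+4) ≤ 2*(N:ℝ) := by exact_mod_cast h1
          rw [min_eq_right (by linarith)]
        · push_neg at hiT
          rw [if_neg (by rw [Finset.mem_range]; omega)]
          have h1 : 2*N ≤ 4*i+3 := by omega
          have h2 : 2*(N:ℝ) ≤ 4*(i:ℝ)+3 := by exact_mod_cast h1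
          rw [min_eq_left (by linarith)]
      rw [Finset.sum_congr rfl hterm, Finset.sum_ite_mem,
        Finset.inter_eq_right.mpr (Finset.range_subset_range.mpr (by omega)),
        gauss_aux]
    rw [hmain, if_pos rfl, hprod]
    have hlast : (4*(m:ℝ)+3 - 2*(N:ℝ)) + ((N:ℝ) - ((2*(m+1)+1:ℕ):ℝ) + 1) = (2*(m:ℝ)+1) - N := by
      push_cast; ring
    rw [hlast]
    have hS2 : S2 = ((N:ℝ)*N - N) / 2 := by linarith
    rw [hS2]
    rcases Nat.lt_or_ge N (2*m+2) with hcase | hcase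
    · have hT : T = N / 2 := by omega
      have hub : (N:ℝ) ≤ 2*(m:ℝ)+1 := by exact_mod_cast (by omega : N ≤ 2*m+1)
      rw [min_eq_left (by linarith), if_neg (by omega)]
      rcases Nat.even_or_odd N with ⟨t, ht⟩ | ⟨t, ht⟩
      · rw [show T = t by omega, show N = t + t from ht]; push_cast; ring
      · rw [show T = t by omega, show N = 2*t + 1 from ht]; push_cast; ring
    · have hT : T = m := by omega
      rcases Nat.eq_or_lt_of_le hcase with hN2 | hN2
      · have hNv : N = 2*m+2 := hN2.symm
        have hval : (2*(m:ℝ)+1) - (N:ℝ) = -1 := by rw [hNv]; push_cast; ring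
        rw [hval, min_eq_right (by norm_num), hT, if_neg (by omega), hNv]
        push_cast; ring
      · have hNv : N = 2*m+3 := by omega
        have hval : (2*(m:ℝ)+1) - (N:ℝ) = -2 := by rw [hNv]; push_cast; ring
        rw [hval, min_eq_right (by norm_num), hT, if_pos (by omega), hNv]
        push_cast; ring
  constructor
  · refine ⟨fun i => if c i < 0 then 1 else 0,
      fun i => by by_cases h : c i < 0 <;> simp [h], ?_⟩
    rw [hW]
    have hopt : ∑ i, c i * (if c i < 0 then (1:ℝ) else 0) = M := by
      rw [hMdef]
      refine Finset.sum_congr rfl fun i _ => ?_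
      by_cases h : c i < 0
      · rw [if_pos h, min_eq_right h.le, mul_one]
      · rw [if_neg h, min_eq_left (le_of_not_gt h), mul_zero]
    rw [hopt, hKey]
    ring
  · rintro s ⟨w, hw, rfl⟩
    rw [hW]
    have hle : M ≤ ∑ i, c i * w i := by
      rw [hMdef]
      refine Finset.sum_le_sum fun i _ => ?_
      rcases hw i with h | h
      · rw [h, mul_zero]; exact min_le_left _ _
      · rw [h, mul_one]; exact min_le_right _ _
    linarith [hKey]
end

section
/- There is no quadratic penalty function enforcing a triple product: there do not exist real coefficients defining a multilinear polynomial p(x,y,z,w) of degree at most 2 in the four binary variables x, y, z, w such that for all x, y, z, w ∈ {0,1}, p(x,y,z,w) = 0 whenever w = x·y·z and p(x,y,z,w) ≥ 1 whenever w ≠ x·y·z. -/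
/-- There is no quadratic penalty function enforcing a triple product: no
multilinear polynomial of degree at most 2 in the binary variables `x, y, z, w`
(a linear combination of `1, x, y, z, w, xy, xz, xw, yz, yw, zw`) vanishes
whenever `w = xyz` and is at least 1 whenever `w ≠ xyz`. -/
theorem no_quadratic_penalty_for_triple_product :
    ¬ ∃ c₀ c₁ c₂ c₃ c₄ c₅ c₆ c₇ c₈ c₉ c₁₀ : ℝ,
      ∀ x y z w : ℝ, (x = 0 ∨ x = 1) → (y = 0 ∨ y = 1) → (z = 0 ∨ z = 1) →
        (w = 0 ∨ w = 1) →
        (w = x * y * z →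
          c₀ + c₁ * x + c₂ * y + c₃ * z + c₄ * w + c₅ * x * y + c₆ * x * z
            + c₇ * x * w + c₈ * y * z + c₉ * y * w + c₁₀ * z * w = 0) ∧
        (w ≠ x * y * z →
          1 ≤ c₀ + c₁ * x + c₂ * y + c₃ * z + c₄ * w + c₅ * x * y + c₆ * x * z
            + c₇ * x * w + c₈ * y * z + c₉ * y * w + c₁₀ * z * w) := by
  rintro ⟨c₀, c₁, c₂, c₃, c₄, c₅, c₆, c₇, c₈, c₉, c₁₀, h⟩
  have h0 := (h 0 0 0 0 (Or.inl rfl) (Or.inl rfl) (Or.inl rfl) (Or.inl rfl)).1 (by norm_num)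
  have h1 := (h 1 0 0 0 (Or.inr rfl) (Or.inl rfl) (Or.inl rfl) (Or.inl rfl)).1 (by norm_num)
  have h2 := (h 0 1 0 0 (Or.inl rfl) (Or.inr rfl) (Or.inl rfl) (Or.inl rfl)).1 (by norm_num)
  have h3 := (h 0 0 1 0 (Or.inl rfl) (Or.inl rfl) (Or.inr rfl) (Or.inl rfl)).1 (by norm_num)
  have h4 := (h 1 1 0 0 (Or.inr rfl) (Or.inr rfl) (Or.inl rfl) (Or.inl rfl)).1 (by norm_num)
  have h5 := (h 1 0 1 0 (Or.inr rfl) (Or.inl rfl) (Or.inr rfl) (Or.inl rfl)).1 (by norm_num)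
  have h6 := (h 0 1 1 0 (Or.inl rfl) (Or.inr rfl) (Or.inr rfl) (Or.inl rfl)).1 (by norm_num)
  have h7 := (h 1 1 1 0 (Or.inr rfl) (Or.inr rfl) (Or.inr rfl) (Or.inl rfl)).2 (by norm_num)
  norm_num at h0 h1 h2 h3 h4 h5 h6 h7
  linarith
end

section
/- For all x, y, z ∈ {0,1}, x·y·z = min over (u,v) ∈ {0,1}×{0,1} of [ x·u + y·z + (2 − y − u − z)·v ]. -/
/-- Quadratization of a positive cubic term (2-split combined with the
Freedman–Drineas identity): for binary `x, y, z`,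
`xyz = min_{(u,v)∈{0,1}²} [xu + yz + (2 − y − u − z)v]`. -/
theorem cubic_two_split_quadratization
    (x y z : ℝ) (hx : x = 0 ∨ x = 1) (hy : y = 0 ∨ y = 1) (hz : z = 0 ∨ z = 1) :
    IsLeast
      {s : ℝ | ∃ u v : ℝ, (u = 0 ∨ u = 1) ∧ (v = 0 ∨ v = 1) ∧
        s = x * u + y * z + (2 - y - u - z) * v}
      (x * y * z) := by
  constructor
  · rcases hy with hy | hy <;> rcases hz with hz | hz
    · exact ⟨0, 0, Or.inl rfl, Or.inl rfl, by subst hy hz; ring⟩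
    · exact ⟨0, 0, Or.inl rfl, Or.inl rfl, by subst hy hz; ring⟩
    · exact ⟨0, 0, Or.inl rfl, Or.inl rfl, by subst hy hz; ring⟩
    · exact ⟨1, 1, Or.inr rfl, Or.inr rfl, by subst hy hz; ring⟩
  · rintro s ⟨u, v, hu, hv, rfl⟩
    rcases hx with h | h <;> rcases hy with h2 | h2 <;> rcases hz with h3 | h3 <;>
      rcases hu with h4 | h4 <;> rcases hv with h5 | h5 <;>
      subst h h2 h3 h4 h5 <;> norm_num
end

section
/- For every positive integer p, the family of Boolean functions {φ_z : z ∈ {0,1}^p} on {0,1}^p defined by φ_z(y) = 1 if y = z and φ_z(y) = 0 otherwise, satisfies the splitting condition: min over y ∈ {0,1}^p of Σ_{z∈{0,1}^p} φ_z(y) = 1, and for every proper subset I ⊊ {0,1}^p there exists y_I ∈ {0,1}^p with Σ_{z∈I} φ_z(y_I) = 0. Consequently, by Theorem 1, for any positive integer d and any cover P_z (z ∈ {0,1}^p) of {1,…,d} by sets of size at most ⌈d/2^p⌉, every positive monomial ∏_{j=1}^d x_j equals min over y ∈ {0,1}^p of Σ_{z∈{0,1}^p} φ_z(y) ∏_{j∈P_z}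 x_j, a sum of 2^p monomial terms each of degree at most p + ⌈d/2^p⌉. -/
/-- The family of indicator functions `φ_z(y) = [y = z]`, for `z ∈ {0,1}^p`,
satisfies the splitting condition of Theorem 1: the minimum over `y` of
`∑_z φ_z(y)` is 1, and for every proper subset `I ⊊ {0,1}^p` some `y` makes
`∑_{z∈I} φ_z(y) = 0`. Consequently, for any `d ≥ 1` and any cover
`P_z (z ∈ {0,1}^p)` of `{1,…,d}` by sets of size at most `⌈d/2^p⌉` (natural-number
ceiling division `(d + 2^p − 1)/2^p`), every positive monomial `∏_{j=1}^d x_j`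
equals the minimum over `y ∈ {0,1}^p` of `∑_z φ_z(y) ∏_{j∈P_z} x_j`. -/
theorem indicator_family_splitting
    (p : ℕ) (hp : 0 < p) :
    IsLeast
      {s : ℝ | ∃ y : Fin p → Bool,
        s = ∑ z : Fin p → Bool, if y = z then (1 : ℝ) else 0} 1
    ∧ (∀ I : Finset (Fin p → Bool), I ≠ Finset.univ →
        ∃ y : Fin p → Bool, ∑ z ∈ I, (if y = z then (1 : ℝ) else 0) = 0)
    ∧ (∀ d : ℕ, 0 < d → ∀ P : (Fin p → Bool) → Finset (Fin d),
        (∀ j : Fin d, ∃ z, j ∈ P z) →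
        (∀ z, (P z).card ≤ (d + 2 ^ p - 1) / 2 ^ p) →
        ∀ x : Fin d → ℝ, (∀ j, x j = 0 ∨ x j = 1) →
        IsLeast
          {s : ℝ | ∃ y : Fin p → Bool,
            s = ∑ z : Fin p → Bool,
                  (if y = z then (1 : ℝ) else 0) * ∏ j ∈ P z, x j}
          (∏ j, x j)) := by
  refine ⟨⟨⟨fun _ => false, ?_⟩, ?_⟩, ?_, ?_⟩
  · simp
  · rintro s ⟨y, rfl⟩
    simp
  · intro I hI
    obtain ⟨y, hy⟩ : ∃ y, y ∉ I := by
      by_contra h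
      push_neg at h
      exact hI (Finset.eq_univ_iff_forall.2 h)
    exact ⟨y, Finset.sum_eq_zero fun z hz => by
      simp only [ite_eq_right_iff]
      rintro rfl; exact absurd hz hy⟩
  · intro d hd P hcover hcard x hx
    have hsum : ∀ y : Fin p → Bool,
        (∑ z : Fin p → Bool,
          (if y = z then (1 : ℝ) else 0) * ∏ j ∈ P z, x j)
        = ∏ j ∈ P y, x j := by
      intro y
      rw [Finset.sum_eq_single y]
      · simp
      · intro z _ hz
        simp [Ne.symm hz]
      · simp
    constructor
    · by_cases hall : ∀ j, x j = 1
      · refine ⟨fun _ => false, ?_⟩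
        rw [hsum]
        simp [hall]
      · push_neg at hall
        obtain ⟨j₀, hj₀⟩ := hall
        have hx0 : x j₀ = 0 := (hx j₀).resolve_right hj₀
        obtain ⟨z₀, hz₀⟩ := hcover j₀
        refine ⟨z₀, ?_⟩
        rw [hsum, Finset.prod_eq_zero hz₀ hx0,
          Finset.prod_eq_zero (Finset.mem_univ j₀) hx0]
    · rintro s ⟨y, rfl⟩
      rw [hsum]
      by_cases hall : ∀ j, x j = 1
      · simp [hall]
      · push_neg at hall
        obtain ⟨j₀, hj₀⟩ := hall
        have hx0 : x j₀ = 0 := (hx j₀).resolve_right hj₀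
        rw [Finset.prod_eq_zero (Finset.mem_univ j₀) hx0]
        exact Finset.prod_nonneg fun j _ => by rcases hx j with h | h <;> simp [h]
end
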